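/- Let u₁ denote the unique solution of sin u = u·cos u in (π, 3π/2). Let L > 0 and k > 0 satisfy 2kL ≤ u₁. Then the map Δk ↦ ∫_0^L cos(Δk·x) dx is strictly decreasing on the interval [0, 2k]. In particular, under the cell-length condition L ≤ u₁/(2k), the integrated absorption response of a single target with Δφ = 0 is a monotonic (hence unambiguous) function of the spatial frequency Δk on its admissible nonnegative range. -/

import Mathlib

/-- Under the cell-length condition `2kL ≤ u₁`, the integrated absorption response
`Δk ↦ ∫₀ᴸ cos(Δk·x) dx` is strictly decreasing on `[0, 2k]`, hence unambiguous. -/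
theorem integrated_power_monotone
    (u₁ : ℝ) (hu₁ : u₁ ∈ Set.Ioo Real.pi (3 * Real.pi / 2))
    (hroot : Real.sin u₁ = u₁ * Real.cos u₁)
    (L k : ℝ) (hL : 0 < L) (hk : 0 < k)
    (hcell : 2 * k * L ≤ u₁) :
    StrictAntiOn (fun Δk : ℝ => ∫ x in (0:ℝ)..L, Real.cos (Δk * x))
      (Set.Icc 0 (2 * k)) := by
  obtain ⟨hπu, hu3π⟩ := hu₁
  have hπ0 := Real.pi_pos
  -- derivative of φ u = sin u - u cos u is u sin u
  have hderivφ : ∀ x : ℝ, HasDerivAt (fun y => Real.sin y - y * Real.cos y)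
      (x * Real.sin x) x := by
    intro x
    have h1 := Real.hasDerivAt_sin x
    have h2 := (hasDerivAt_id x).mul (Real.hasDerivAt_cos x)
    have h := h1.sub h2
    exact h.congr_deriv (by simp [mul_comm])
  have hcontφ : Continuous fun y => Real.sin y - y * Real.cos y :=
    Real.continuous_sin.sub (continuous_id.mul Real.continuous_cos)
  -- positivity of φ on (0, u₁)
  have hphi : ∀ u : ℝ, 0 < u → u < u₁ → 0 < Real.sin u - u * Real.cos u := by
    intro u hu0 huu
    by_cases hle : u ≤ Real.pi
    · have hmono : StrictMonoOn (fun y => Real.sin y - y * Real.cos y)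
          (Set.Icc 0 Real.pi) := by
        apply strictMonoOn_of_deriv_pos (convex_Icc _ _) hcontφ.continuousOn
        intro x hx
        rw [interior_Icc] at hx
        rw [(hderivφ x).deriv]
        exact mul_pos hx.1 (Real.sin_pos_of_pos_of_lt_pi hx.1 hx.2)
      have := hmono (Set.left_mem_Icc.mpr hπ0.le) ⟨hu0.le, hle⟩ hu0
      simpa using this
    · push_neg at hle
      have hanti : StrictAntiOn (fun y => Real.sin y - y * Real.cos y)
          (Set.Icc Real.pi u₁) := by
        apply strictAntiOn_of_deriv_neg (convex_Icc _ _) hcontφ.continuousOn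
        intro x hx
        rw [interior_Icc] at hx
        rw [(hderivφ x).deriv]
        have hxpos : 0 < x := hπ0.trans hx.1
        have hsin : Real.sin x < 0 := by
          have hxπ : Real.sin (x - Real.pi) > 0 := by
            apply Real.sin_pos_of_pos_of_lt_pi
            · linarith [hx.1]
            · have : x < 3 * Real.pi / 2 := hx.2.trans hu3π
              linarith
          have : Real.sin (x - Real.pi) = -Real.sin x := by
            rw [Real.sin_sub]
            simp
          linarith
        exact mul_neg_of_pos_of_neg hxpos hsin
      have := hanti ⟨hle.le, huu.le⟩ (Set.right_mem_Icc.mpr (hle.le.trans huu.le)) huu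
      have h0 : Real.sin u₁ - u₁ * Real.cos u₁ = 0 := by linarith [hroot]
      simpa [h0] using this
  -- value of the integral for positive Δk
  have hint : ∀ t : ℝ, 0 < t →
      (∫ x in (0:ℝ)..L, Real.cos (t * x)) = Real.sin (t * L) / t := by
    intro t ht
    have hFD : ∀ x ∈ Set.uIcc (0:ℝ) L,
        HasDerivAt (fun y => Real.sin (t * y) / t) (Real.cos (t * x)) x := by
      intro x _
      have h := ((Real.hasDerivAt_sin (t * x)).comp x
        ((hasDerivAt_id x).const_mul t)).div_const t
      exact h.congr_deriv (by field_simp)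
    rw [intervalIntegral.integral_eq_sub_of_hasDerivAt hFD
      (((Real.continuous_cos.comp (continuous_const.mul continuous_id))).continuousOn.intervalIntegrable)]
    simp
  have hf0 : (∫ x in (0:ℝ)..L, Real.cos ((0:ℝ) * x)) = L := by
    simp
  intro a ha b hb hab
  simp only
  have hbpos : 0 < b := lt_of_le_of_lt ha.1 hab
  have hbL : 0 < b * L := mul_pos hbpos hL
  rcases eq_or_lt_of_le ha.1 with h0 | h0
  · -- a = 0
    rw [← h0, hf0, hint b hbpos]
    have hsl : Real.sin (b * L) < b * L := Real.sin_lt hbL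
    rw [div_lt_iff₀ hbpos]
    nlinarith
  · -- 0 < a
    rw [hint a h0, hint b hbpos]
    have hg : StrictAntiOn (fun t => Real.sin (t * L) / t) (Set.Icc a b) := by
      apply strictAntiOn_of_deriv_neg (convex_Icc _ _)
      · apply ContinuousOn.div
        · exact (Real.continuous_sin.comp (continuous_id.mul continuous_const)).continuousOn
        · exact continuousOn_id
        · intro x hx
          exact (h0.trans_le hx.1).ne'
      · intro x hx
        rw [interior_Icc] at hx
        have hx0 : 0 < x := h0.trans hx.1
        have hD : HasDerivAt (fun t => Real.sin (t * L) / t)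
            ((Real.cos (x * L) * L * x - Real.sin (x * L) * 1) / x ^ 2) x := by
          have h1 : HasDerivAt (fun t : ℝ => Real.sin (t * L)) (Real.cos (x * L) * L) x := by
            simpa [Function.comp_def] using (Real.hasDerivAt_sin (x * L)).comp x ((hasDerivAt_id x).mul_const L)
          exact h1.div (hasDerivAt_id x) hx0.ne'
        rw [hD.deriv]
        have hxLu : x * L < u₁ := by
          have : x * L < 2 * k * L := by
            apply mul_lt_mul_of_pos_right _ hL
            exact hx.2.trans_le hb.2
          linarith
        have hφ := hphi (x * L) (mul_pos hx0 hL) hxLu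
        apply div_neg_of_neg_of_pos
        · nlinarith
        · positivity
    exact hg (Set.left_mem_Icc.mpr hab.le) (Set.right_mem_Icc.mpr hab.le) hab
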